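/- Let (sₖ)_{k∈ℤ} be a hermitian sequence of complex numbers (s_{−k} = conj(sₖ)), let Tₖ be the (k+1)×(k+1) Toeplitz matrix with (i,j)-entry s_{j−i}, let Dₖ = det Tₖ, and let Wₖ be the k×k matrix obtained from Tₖ by deleting the first column and last row, with Fₖ = det Wₖ. Then for all k ≥ 2, D_{k−1}² − D_{k−2} Dₖ = |Fₖ|². -/

import Mathlib

open Matrix Complex

namespace ToeplitzAux

/-- The equivalence sending `inl 0 ↦ 0`, `inl 1 ↦ last`, `inr j ↦ j+1`. -/
noncomputable def rE (n : ℕ) : (Fin 2 ⊕ Fin n) ≃ Fin (n + 2) :=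
  Equiv.ofBijective (Sum.elim ![0, Fin.last (n + 1)] fun j => j.succ.castSucc)
    (by
      rw [Fintype.bijective_iff_injective_and_card]
      refine ⟨?_, by simp [add_comm]⟩
      rintro (a | a) (b | b) h
      · fin_cases a <;> fin_cases b <;> simp_all [Fin.ext_iff]
      · have hb := b.isLt
        fin_cases a <;> simp [Fin.ext_iff] at h <;> omega
      · have ha := a.isLt
        fin_cases b <;> simp [Fin.ext_iff] at h <;> omega
      · simp only [Sum.elim_inr, Fin.ext_iff, Fin.coe_castSucc, Fin.val_succ] at h
        exact congrArg Sum.inr (Fin.ext (by omega)))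

@[simp] lemma rE_inl_zero (n : ℕ) : rE n (Sum.inl 0) = 0 := rfl
@[simp] lemma rE_inl_one (n : ℕ) : rE n (Sum.inl 1) = Fin.last (n + 1) := rfl
@[simp] lemma rE_inr (n : ℕ) (j : Fin n) : rE n (Sum.inr j) = j.succ.castSucc := rfl

variable {R : Type*} [CommRing R]

/-- The uncancelled Desnanot–Jacobi identity over any commutative ring. -/
theorem dj_aux {n : ℕ} (A : Matrix (Fin (n + 2)) (Fin (n + 2)) R) :
    A.det * (det (A.submatrix Fin.succ Fin.succ) * det (A.submatrix Fin.castSucc Fin.castSucc)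
      - det (A.submatrix Fin.succ Fin.castSucc) * det (A.submatrix Fin.castSucc Fin.succ))
    = A.det * (A.det *
        det (A.submatrix (fun i : Fin n => i.succ.castSucc) fun i => i.succ.castSucc)) := by
  have hXcol : ∀ (k : Fin 2 ⊕ Fin n) (j : Fin 2),
      (fromBlocks (of fun i j => adjugate A (rE n (Sum.inl i)) (rE n (Sum.inl j)))
        (0 : Matrix (Fin 2) (Fin n) R)
        (of fun i j => adjugate A (rE n (Sum.inr i)) (rE n (Sum.inl j)))
        (1 : Matrix (Fin n) (Fin n) R)) k (Sum.inl j)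
      = adjugate A (rE n k) (rE n (Sum.inl j)) := by
    rintro (k | k) j <;> rfl
  have hmul : (A.submatrix (rE n) (rE n)) *
      (fromBlocks (of fun i j => adjugate A (rE n (Sum.inl i)) (rE n (Sum.inl j)))
        (0 : Matrix (Fin 2) (Fin n) R)
        (of fun i j => adjugate A (rE n (Sum.inr i)) (rE n (Sum.inl j)))
        (1 : Matrix (Fin n) (Fin n) R)) =
      fromBlocks (A.det • (1 : Matrix (Fin 2) (Fin 2) R))
        (of fun i j => A (rE n (Sum.inl i)) (rE n (Sum.inr j)))
        (0 : Matrix (Fin n) (Fin 2) R)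
        (of fun i j => A (rE n (Sum.inr i)) (rE n (Sum.inr j))) := by
    ext i j
    cases j with
    | inl j =>
      simp only [mul_apply, submatrix_apply, hXcol]
      rw [Equiv.sum_comp (rE n) (fun k => A (rE n i) k * adjugate A k (rE n (Sum.inl j))),
        ← mul_apply, mul_adjugate, Matrix.smul_apply, one_apply]
      cases i with
      | inl i =>
        simp only [fromBlocks_apply₁₁, Matrix.smul_apply, one_apply, Equiv.apply_eq_iff_eq,
          Sum.inl.injEq]
      | inr i =>
        simp only [fromBlocks_apply₂₁, Matrix.zero_apply, Equiv.apply_eq_iff_eq]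
        simp
    | inr j =>
      rw [mul_apply, Fintype.sum_sum_type]
      simp only [fromBlocks_apply₁₂, fromBlocks_apply₂₂, Matrix.zero_apply, mul_zero,
        Finset.sum_const_zero, zero_add, submatrix_apply, one_apply, mul_ite, mul_one]
      cases i <;> simp [Finset.sum_ite_eq']
  have hdetprod := congrArg det hmul
  rw [det_mul, det_fromBlocks_zero₂₁, det_submatrix_equiv_self, det_fromBlocks_zero₁₂,
    det_one, mul_one, det_smul, det_one, mul_one, Fintype.card_fin] at hdetprod
  have hC : det (of fun i j : Fin 2 => adjugate A (rE n (Sum.inl i)) (rE n (Sum.inl j))) =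
      det (A.submatrix Fin.succ Fin.succ) * det (A.submatrix Fin.castSucc Fin.castSucc)
      - det (A.submatrix Fin.succ Fin.castSucc) * det (A.submatrix Fin.castSucc Fin.succ) := by
    rw [det_fin_two]
    simp only [of_apply, rE_inl_zero, rE_inl_one, adjugate_fin_succ_eq_det_submatrix,
      Fin.succAbove_zero, Fin.succAbove_last, Fin.val_zero, Fin.val_last, add_zero, zero_add,
      pow_zero, one_mul]
    have he : ((-1 : R)) ^ (n + 1 + (n + 1)) = 1 :=
      Even.neg_one_pow ⟨n + 1, rfl⟩
    rw [he, one_mul]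
    ring_nf
    rw [show ((-1 : R)) ^ (n * 2) = 1 from Even.neg_one_pow ⟨n, by ring⟩, mul_one]
  have hM : (of fun i j : Fin n => A (rE n (Sum.inr i)) (rE n (Sum.inr j))) =
      A.submatrix (fun i : Fin n => i.succ.castSucc) fun i => i.succ.castSucc := by
    ext i j; simp
  rw [hC, hM] at hdetprod
  rw [hdetprod]; ring

/-- The Desnanot–Jacobi (Dodgson condensation) identity. -/
theorem dj {n : ℕ} (A : Matrix (Fin (n + 2)) (Fin (n + 2)) R) :
    det (A.submatrix Fin.succ Fin.succ) * det (A.submatrix Fin.castSucc Fin.castSucc)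
      - det (A.submatrix Fin.succ Fin.castSucc) * det (A.submatrix Fin.castSucc Fin.succ)
    = A.det * det (A.submatrix (fun i : Fin n => i.succ.castSucc) fun i => i.succ.castSucc) := by
  set X := mvPolynomialX (Fin (n + 2)) (Fin (n + 2)) ℤ with hXdef
  have hX : X.det ≠ 0 := det_mvPolynomialX_ne_zero _ _
  have key := mul_left_cancel₀ hX (dj_aux X)
  set f : MvPolynomial (Fin (n + 2) × Fin (n + 2)) ℤ →+* R :=
    MvPolynomial.eval₂Hom (Int.castRingHom R) (fun p => A p.1 p.2) with hf
  have hmap : X.map ⇑f = A := by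
    simpa [hf, MvPolynomial.coe_eval₂Hom] using
      mvPolynomialX_map_eval₂ (Int.castRingHom R) A
  have h2 := congrArg f key
  simp only [map_sub, _root_.map_mul, RingHom.map_det, RingHom.mapMatrix_apply, ← submatrix_map,
    hmap] at h2
  exact h2

end ToeplitzAux

/-- Jacobi-type identity for Toeplitz determinants of a hermitian sequence:
`D_{k−1}² − D_{k−2} Dₖ = |Fₖ|²`, where `Dₖ = det Tₖ` for the `(k+1)×(k+1)`
Toeplitz matrix `Tₖ` with `(i,j)` entry `s_{j−i}`, and `Fₖ` is the determinant
of the matrix `Wₖ` obtained from `Tₖ` by deleting the first column and the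
last row. -/
theorem toeplitz_det_identity (s : ℤ → ℂ)
    (hherm : ∀ k : ℤ, s (-k) = starRingEnd ℂ (s k))
    (D : ℕ → ℂ)
    (hD : ∀ k : ℕ, D k = Matrix.det (Matrix.of (fun i j : Fin (k+1) => s ((j:ℤ) - (i:ℤ)))))
    (F : ℕ → ℂ)
    (hF : ∀ k : ℕ, F k = Matrix.det (Matrix.of (fun i j : Fin k => s (((j:ℤ) + 1) - (i:ℤ)))))
    (k : ℕ) (hk : 2 ≤ k) :
    (D (k-1))^2 - D (k-2) * D k = ((‖F k‖ : ℂ))^2 := by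
  obtain ⟨n, rfl⟩ : ∃ n, k = n + 2 := ⟨k - 2, by omega⟩
  have h1 : n + 2 - 1 = n + 1 := by omega
  have h2 : n + 2 - 2 = n := by omega
  rw [h1, h2]
  set A : Matrix (Fin (n + 1 + 2)) (Fin (n + 1 + 2)) ℂ :=
    Matrix.of (fun i j => s ((j : ℤ) - (i : ℤ))) with hA
  have hdj := ToeplitzAux.dj A
  have e1 : A.submatrix Fin.succ Fin.succ =
      Matrix.of (fun i j : Fin (n + 2) => s ((j:ℤ) - (i:ℤ))) := by
    ext i j
    simp only [hA, Matrix.submatrix_apply, Matrix.of_apply]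
    congr 1
    try push_cast [Fin.val_succ, Fin.coe_castSucc]
    try ring
  have e2 : A.submatrix Fin.castSucc Fin.castSucc =
      Matrix.of (fun i j : Fin (n + 2) => s ((j:ℤ) - (i:ℤ))) := by
    ext i j
    simp [hA]
  have e3 : A.submatrix (fun i : Fin (n + 1) => i.succ.castSucc) (fun i => i.succ.castSucc) =
      Matrix.of (fun i j : Fin (n + 1) => s ((j:ℤ) - (i:ℤ))) := by
    ext i j
    simp only [hA, Matrix.submatrix_apply, Matrix.of_apply]
    congr 1
    try push_cast [Fin.val_succ, Fin.coe_castSucc]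
    try ring
  have e4 : A.submatrix Fin.castSucc Fin.succ =
      Matrix.of (fun i j : Fin (n + 2) => s (((j:ℤ) + 1) - (i:ℤ))) := by
    ext i j
    simp only [hA, Matrix.submatrix_apply, Matrix.of_apply]
    congr 1
    try push_cast [Fin.val_succ, Fin.coe_castSucc]
    try ring
  have e5 : A.submatrix Fin.succ Fin.castSucc =
      ((Matrix.of (fun i j : Fin (n + 2) => s (((j:ℤ) + 1) - (i:ℤ))))ᵀ).map (starRingEnd ℂ) := by
    ext i j
    simp only [hA, Matrix.submatrix_apply, Matrix.of_apply, Matrix.map_apply,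
      Matrix.transpose_apply]
    rw [← hherm]
    congr 1
    try push_cast [Fin.val_succ, Fin.coe_castSucc]
    try ring
  have e5det : (A.submatrix Fin.succ Fin.castSucc).det = starRingEnd ℂ (F (n + 2)) := by
    rw [e5, hF]
    rw [show ((Matrix.of (fun i j : Fin (n + 2) => s (((j:ℤ) + 1) - (i:ℤ))))ᵀ).map
        (starRingEnd ℂ) = (starRingEnd ℂ).mapMatrix
        ((Matrix.of (fun i j : Fin (n + 2) => s (((j:ℤ) + 1) - (i:ℤ))))ᵀ) from rfl,
      ← RingHom.map_det, Matrix.det_transpose]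
  rw [e1, e2, e3, e4, e5det, ← hF (n + 2), ← hD (n + 1), ← hD n] at hdj
  have hAdet : A.det = D (n + 2) := by rw [hD]
  rw [hAdet] at hdj
  have habs : ((‖F (n + 2)‖ : ℂ))^2 = starRingEnd ℂ (F (n + 2)) * F (n + 2) := by
    rw [mul_comm, Complex.mul_conj, ← Complex.sq_norm, Complex.ofReal_pow]
  rw [habs]
  rw [sq]
  linear_combination hdj
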